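/- arXiv:0801.0051 — 2 statements merged into one kernel-verified Lean document; each statement's English description precedes it below -/
import Mathlib

section
/- Let C = e^{−√(log 2)}. Then there exist positive constants c_1, c_2 such that for all sufficiently large real t, c_1 · C^{2√t} ≤ m(−t) ≤ c_2 · C^{√t}; i.e. C^{2√t} ≪ m(−t) ≪ C^{√t} as t → ∞. -/
open scoped Classical
open MeasureTheory

/-- Cumulative sums `a₀ + a₁ + ⋯ + a_k` of the regular continued fraction
expansion of `x` (`none` once the expansion has terminated). -/
noncomputable def cfSum (x : ℝ) : ℕ → Option ℝ
  | 0 => some (⌊x⌋ : ℝ)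
  | (k + 1) => (cfSum x k).bind fun s =>
      ((GenContFract.of x).partDens.get? k).map fun b => s + b

/-- The Minkowski question mark function in its version on `[0, ∞)`:
`F([a₀; a₁, a₂, …]) = 1 - 2^{-a₀} + 2^{-(a₀+a₁)} - 2^{-(a₀+a₁+a₂)} + ⋯`. -/
noncomputable def minkQ (x : ℝ) : ℝ :=
  1 + ∑' k : ℕ, (cfSum x k).elim 0 fun s => (-1 : ℝ) ^ (k + 1) * (2 : ℝ) ^ (-s)

/-- `μ` is the Lebesgue–Stieltjes measure `dF` of the Minkowski question mark
function: it is supported on `[0, ∞)` and its cumulative distribution function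
is `F = minkQ` there. -/
def IsMinkowskiMeasure (μ : Measure ℝ) : Prop :=
  μ (Set.Iio 0) = 0 ∧ ∀ x : ℝ, 0 ≤ x → μ (Set.Iic x) = ENNReal.ofReal (minkQ x)

/-- The moment `m_L = ∫₀^∞ (x/(x+1))^L dF(x)`. -/
noncomputable def mMom (μ : Measure ℝ) (L : ℕ) : ℝ :=
  ∫ x, (x / (x + 1)) ^ L ∂μ

/-- The moment `M_L = ∫₀^∞ x^L dF(x)`. -/
noncomputable def MMom (μ : Measure ℝ) (L : ℕ) : ℝ :=
  ∫ x, x ^ L ∂μ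

/-- The exponential generating function of the moments,
`m(t) = ∫₀^∞ exp(xt/(x+1)) dF(x)`. -/
noncomputable def mEGF (μ : Measure ℝ) (t : ℝ) : ℝ :=
  ∫ x, Real.exp (x * t / (x + 1)) ∂μ

noncomputable def mkTerm (x : ℝ) (k : ℕ) : ℝ :=
  (cfSum x k).elim 0 fun s => (-1 : ℝ) ^ (k + 1) * (2 : ℝ) ^ (-s)

lemma minkQ_eq (x : ℝ) : minkQ x = 1 + ∑' k : ℕ, mkTerm x k := rfl

lemma cfSum_lower (x : ℝ) : ∀ k s, cfSum x k = some s → (⌊x⌋ : ℝ) + k ≤ s := by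
  intro k
  induction k with
  | zero =>
    intro s hs
    simp only [cfSum, Option.some.injEq] at hs
    simp [← hs]
  | succ k ih =>
    intro s hs
    rw [cfSum] at hs
    obtain ⟨s', hs', hmap⟩ := Option.bind_eq_some_iff.mp hs
    obtain ⟨b, hb, hsb⟩ := Option.map_eq_some_iff.mp hmap
    have h1 : (1:ℝ) ≤ b := GenContFract.of_one_le_get?_partDen hb
    have h2 := ih s' hs'
    push_cast
    rw [← hsb]
    linarith

lemma mkTerm_abs_le {x : ℝ} (hx : 0 ≤ x) (k : ℕ) :
    |mkTerm x k| ≤ (2:ℝ) ^ (-(⌊x⌋:ℝ)) * (1/2 : ℝ) ^ k := by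
  have hpow : (2:ℝ) ^ (-(⌊x⌋:ℝ)) * (1/2 : ℝ) ^ k = (2:ℝ) ^ (-((⌊x⌋:ℝ) + k)) := by
    rw [neg_add, Real.rpow_add (by norm_num)]
    congr 1
    rw [Real.rpow_neg (by norm_num), Real.rpow_natCast, one_div, inv_pow]
  unfold mkTerm
  cases h : cfSum x k with
  | none => simp only [Option.elim]; rw [abs_zero]; positivity
  | some s =>
    have hs : (⌊x⌋ : ℝ) + k ≤ s := cfSum_lower x k s h
    simp only [Option.elim]
    rw [abs_mul, abs_pow, abs_neg, abs_one, one_pow, one_mul,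
      abs_of_pos (Real.rpow_pos_of_pos two_pos _), hpow]
    exact Real.rpow_le_rpow_of_exponent_le one_le_two (by linarith)

lemma mkTerm_abs_le' {x : ℝ} (hx : 0 ≤ x) (k : ℕ) : |mkTerm x k| ≤ (1/2 : ℝ) ^ k := by
  refine (mkTerm_abs_le hx k).trans ?_
  have h1 : (2:ℝ) ^ (-(⌊x⌋:ℝ)) ≤ 1 := by
    rw [← Real.rpow_zero 2]
    refine Real.rpow_le_rpow_of_exponent_le one_le_two ?_
    simp only [neg_nonpos]
    exact_mod_cast Int.floor_nonneg.mpr hx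
  nlinarith [pow_nonneg (by norm_num : (0:ℝ) ≤ 1/2) k]

lemma summable_mkTerm {x : ℝ} (hx : 0 ≤ x) : Summable (mkTerm x) :=
  Summable.of_norm_bounded summable_geometric_two
    (fun k => by simpa [Real.norm_eq_abs] using mkTerm_abs_le' hx k)

lemma minkQ_le_one {x : ℝ} (hx : 0 ≤ x) : minkQ x ≤ 1 := by
  set c : ℝ := (2:ℝ) ^ (-(⌊x⌋:ℝ)) with hc
  have hc0 : 0 < c := Real.rpow_pos_of_pos two_pos _
  have hsum := summable_mkTerm hx
  have h0 : mkTerm x 0 = -c := by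
    simp [mkTerm, cfSum, Option.elim, hc]
  have hterm : ∀ k : ℕ, mkTerm x (k + 1) ≤ (c/2) * (1/2:ℝ)^k := by
    intro k
    have := (abs_le.mp (mkTerm_abs_le hx (k+1))).2
    calc mkTerm x (k+1) ≤ c * (1/2:ℝ)^(k+1) := this
      _ = (c/2) * (1/2:ℝ)^k := by ring
  have hsum1 : Summable (fun k => mkTerm x (k+1)) := (summable_nat_add_iff 1).2 hsum
  have hsum2 : Summable (fun k : ℕ => (c/2) * (1/2:ℝ)^k) := summable_geometric_two.mul_left _
  have htail : ∑' k, mkTerm x (k+1) ≤ ∑' k : ℕ, (c/2) * (1/2:ℝ)^k :=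
    Summable.tsum_le_tsum hterm hsum1 hsum2
  have htail2 : ∑' k : ℕ, (c/2) * (1/2:ℝ)^k = c := by
    rw [tsum_mul_left, tsum_geometric_two]; ring
  rw [minkQ_eq, hsum.tsum_eq_zero_add, h0]
  linarith [htail.trans_eq htail2]

lemma cfSum_none_succ {x : ℝ} {k : ℕ} (h : cfSum x k = none) : cfSum x (k+1) = none := by
  rw [cfSum, h]; rfl

lemma of_inv_nat_s_get?_zero {n : ℕ} (hn : 2 ≤ n) :
    (GenContFract.of ((n:ℝ)⁻¹)).s.get? 0 = some ⟨1, (n:ℝ)⟩ := by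
  have hn0 : (0:ℝ) < n := by positivity
  have hx0 : (0:ℝ) ≤ (n:ℝ)⁻¹ := by positivity
  have hx1 : ((n:ℝ)⁻¹) < 1 := by
    rw [inv_lt_one_iff₀]; right; exact_mod_cast by omega
  have hfr : Int.fract ((n:ℝ)⁻¹) = (n:ℝ)⁻¹ := Int.fract_eq_self.mpr ⟨hx0, hx1⟩
  have hne : Int.fract ((n:ℝ)⁻¹) ≠ 0 := by
    rw [hfr]; positivity
  have := GenContFract.of_s_head hne
  rw [show (GenContFract.of ((n:ℝ)⁻¹)).s.get? 0 = (GenContFract.of ((n:ℝ)⁻¹)).s.head from rfl,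
    this, hfr, inv_inv]
  norm_num

lemma of_inv_nat_s_get?_succ {n : ℕ} (k : ℕ) :
    (GenContFract.of ((n:ℝ)⁻¹)).s.get? (k+1) = none := by
  rw [GenContFract.of_s_succ]
  rcases eq_or_ne (Int.fract ((n:ℝ)⁻¹)) 0 with h | h
  · rw [h, show ((0:ℝ))⁻¹ = ((0:ℤ) : ℝ) by norm_num,
      GenContFract.of_s_of_int, Stream'.Seq.get?_nil]
  · have hn2 : 2 ≤ n := by
      by_contra hc
      interval_cases n <;> simp_all
    have hfr : Int.fract ((n:ℝ)⁻¹) = (n:ℝ)⁻¹ := by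
      apply Int.fract_eq_self.mpr
      refine ⟨by positivity, ?_⟩
      rw [inv_lt_one_iff₀]; right; exact_mod_cast by omega
    rw [hfr, inv_inv, show ((n:ℝ)) = ((n:ℤ) : ℝ) by push_cast; ring,
      GenContFract.of_s_of_int, Stream'.Seq.get?_nil]

lemma minkQ_inv_nat {n : ℕ} (hn : 1 ≤ n) : minkQ ((n:ℝ)⁻¹) = (2:ℝ) ^ (-(n:ℝ)) := by
  rcases eq_or_lt_of_le hn with h1 | h2
  · -- n = 1
    subst_vars
    have hx : ((1:ℕ):ℝ)⁻¹ = (1:ℝ) := by norm_num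
    rw [hx]
    have hs : ∀ k, (GenContFract.of ((1:ℕ):ℝ)⁻¹).s.get? k = none := by
      intro k
      have : ((1:ℕ):ℝ)⁻¹ = (((1:ℤ)):ℝ) := by norm_num
      rw [this, GenContFract.of_s_of_int, Stream'.Seq.get?_nil]
    have hpd : ∀ k, (GenContFract.of (1:ℝ)).partDens.get? k = none := by
      intro k
      have := hs k
      rw [hx] at this
      simp [GenContFract.partDens, Stream'.Seq.map_get?, this]
    have h0 : cfSum 1 0 = some 1 := by simp [cfSum]
    have hk : ∀ k, cfSum 1 (k+1) = none := by
      intro k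
      induction k with
      | zero => rw [cfSum, h0, Option.bind_some, hpd 0, Option.map_none]
      | succ k ih => exact cfSum_none_succ ih
    have hterm : ∀ k, k ∉ ({0} : Finset ℕ) → mkTerm 1 k = 0 := by
      intro k hk'
      have : ∃ j, k = j + 1 := by
        rcases k with _ | j
        · simp at hk'
        · exact ⟨j, rfl⟩
      obtain ⟨j, rfl⟩ := this
      simp [mkTerm, hk j]
    rw [minkQ_eq, tsum_eq_sum hterm, Finset.sum_singleton]
    have : mkTerm 1 0 = -(2:ℝ)^(-(1:ℝ)) := by
      simp [mkTerm, cfSum, Option.elim]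
    rw [this]
    rw [Real.rpow_neg_one, show (-((1:ℕ):ℝ)) = (-1 : ℝ) by norm_num, Real.rpow_neg_one]
    norm_num
  · -- n ≥ 2
    have hn2 : 2 ≤ n := h2
    set x : ℝ := ((n:ℝ))⁻¹ with hxdef
    have hn0 : (0:ℝ) < n := by positivity
    have hx0 : (0:ℝ) < x := by positivity
    have hx1 : x < 1 := by
      rw [hxdef, inv_lt_one_iff₀]; right; exact_mod_cast by omega
    have hfl : (⌊x⌋ : ℝ) = 0 := by
      have : ⌊x⌋ = 0 := Int.floor_eq_zero_iff.mpr ⟨hx0.le, hx1⟩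
      rw [this]; norm_num
    have h0 : cfSum x 0 = some 0 := by rw [cfSum]; rw [hfl]
    have hpd0 : (GenContFract.of x).partDens.get? 0 = some (n:ℝ) := by
      simp [GenContFract.partDens, Stream'.Seq.map_get?, hxdef, of_inv_nat_s_get?_zero hn2]
    have hpd1 : ∀ k, (GenContFract.of x).partDens.get? (k+1) = none := by
      intro k
      simp [GenContFract.partDens, Stream'.Seq.map_get?, hxdef, of_inv_nat_s_get?_succ k]
    have h1 : cfSum x 1 = some (n:ℝ) := by
      rw [cfSum, h0, Option.bind_some, hpd0, Option.map_some]
      norm_num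
    have hk : ∀ k, cfSum x (k+2) = none := by
      intro k
      induction k with
      | zero => rw [cfSum, h1, Option.bind_some, hpd1 0, Option.map_none]
      | succ k ih => exact cfSum_none_succ ih
    have hterm : ∀ k, k ∉ ({0, 1} : Finset ℕ) → mkTerm x k = 0 := by
      intro k hk'
      have : ∃ j, k = j + 2 := by
        rcases k with _ | (_ | j)
        · simp at hk'
        · simp at hk'
        · exact ⟨j, rfl⟩
      obtain ⟨j, rfl⟩ := this
      simp [mkTerm, hk j]
    rw [minkQ_eq, tsum_eq_sum hterm, Finset.sum_pair (by norm_num : (0:ℕ) ≠ 1)]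
    have hm0 : mkTerm x 0 = -1 := by
      simp [mkTerm, h0, Option.elim]
    have hm1 : mkTerm x 1 = (2:ℝ)^(-(n:ℝ)) := by
      simp [mkTerm, h1, Option.elim]
    rw [hm0, hm1]
    ring

set_option maxHeartbeats 1000000 in
/-- With `C = e^{−√(log 2)}` one has `C^{2√t} ≪ m(−t) ≪ C^{√t}` as `t → ∞`. -/
theorem mEGF_neg_bounds (μ : Measure ℝ) (hμ : IsMinkowskiMeasure μ) :
    ∃ c₁ : ℝ, 0 < c₁ ∧ ∃ c₂ : ℝ, 0 < c₂ ∧ ∃ t₀ : ℝ, ∀ t : ℝ, t₀ ≤ t →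
      c₁ * Real.exp (-Real.sqrt (Real.log 2)) ^ (2 * Real.sqrt t) ≤ mEGF μ (-t) ∧
      mEGF μ (-t) ≤ c₂ * Real.exp (-Real.sqrt (Real.log 2)) ^ Real.sqrt t := by
  obtain ⟨hnull, hcdf⟩ := hμ
  set L := Real.log 2 with hLdef
  have hL : 0 < L := Real.log_pos one_lt_two
  have hfin : μ Set.univ ≤ 1 := by
    have hcover : (Set.univ : Set ℝ) = ⋃ k : ℕ, (Set.Iio (0:ℝ) ∪ Set.Iic (k:ℝ)) := by
      ext y
      simp only [Set.mem_univ, Set.mem_iUnion, Set.mem_union, Set.mem_Iio, Set.mem_Iic, true_iff]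
      rcases le_or_gt 0 y with hy | hy
      · exact ⟨⌈y⌉₊, Or.inr (Nat.le_ceil y)⟩
      · exact ⟨0, Or.inl hy⟩
    have hd : Directed (· ⊆ ·) (fun k : ℕ => Set.Iio (0:ℝ) ∪ Set.Iic (k:ℝ)) := by
      apply Monotone.directed_le
      intro a b hab
      exact Set.union_subset_union_right _ (Set.Iic_subset_Iic.mpr (by exact_mod_cast hab))
    rw [hcover, hd.measure_iUnion]
    apply iSup_le
    intro k
    calc μ (Set.Iio 0 ∪ Set.Iic (k:ℝ)) ≤ μ (Set.Iio 0) + μ (Set.Iic (k:ℝ)) := measure_union_le _ _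
      _ = ENNReal.ofReal (minkQ k) := by rw [hnull, zero_add, hcdf k (by positivity)]
      _ ≤ 1 := by
          rw [show (1:ENNReal) = ENNReal.ofReal 1 by simp]
          exact ENNReal.ofReal_le_ofReal (minkQ_le_one (by positivity))
  haveI : IsFiniteMeasure μ := ⟨lt_of_le_of_lt hfin ENNReal.one_lt_top⟩
  have hae0 : ∀ᵐ y ∂μ, (0:ℝ) ≤ y := by
    rw [ae_iff]
    convert hnull using 2
    ext y; simp [not_le]
  refine ⟨Real.exp (-L), Real.exp_pos _, 1 + Real.exp (2*L), by positivity, 1, fun t ht => ?_⟩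
  have ht0 : (0:ℝ) < t := lt_of_lt_of_le one_pos ht
  set r : ℝ := Real.sqrt (t / L) with hrdef
  have hr0 : 0 < r := Real.sqrt_pos.mpr (by positivity)
  set n : ℕ := ⌈r⌉₊ with hndef
  have hn1 : 1 ≤ n := Nat.ceil_pos.mpr hr0
  have hnr : (0:ℝ) < n := by exact_mod_cast Nat.ceil_pos.mpr hr0
  have hrn : r ≤ (n:ℝ) := Nat.le_ceil r
  have hn1' : (n:ℝ) < r + 1 := Nat.ceil_lt_add_one hr0.le
  set S : ℝ := Real.sqrt (t * L) with hSdef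
  have hS0 : 0 < S := Real.sqrt_pos.mpr (by positivity)
  have hS : S = Real.sqrt t * Real.sqrt L := Real.sqrt_mul ht0.le L
  have hrL : r * L = S := by
    calc r * L = Real.sqrt (t/L) * Real.sqrt (L*L) := by rw [Real.sqrt_mul_self hL.le]
      _ = Real.sqrt ((t/L) * (L*L)) := (Real.sqrt_mul (by positivity) _).symm
      _ = S := by rw [hSdef]; congr 1; field_simp
  have hSr : S * r = t := by
    calc S * r = Real.sqrt ((t*L) * (t/L)) := (Real.sqrt_mul (by positivity) _).symm
      _ = Real.sqrt (t*t) := by congr 1; field_simp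
      _ = t := Real.sqrt_mul_self ht0.le
  set δ : ℝ := ((n:ℝ))⁻¹ with hδdef
  have hδ0 : 0 < δ := by positivity
  set E : ℝ := (2:ℝ)^(-(n:ℝ)) with hEdef
  have hE0 : 0 < E := Real.rpow_pos_of_pos two_pos _
  have hμIic : μ (Set.Iic δ) = ENNReal.ofReal E := by
    rw [hcdf δ hδ0.le, minkQ_inv_nat hn1]
  have hE : E = Real.exp (-((n:ℝ)*L)) := by
    rw [hEdef, Real.rpow_def_of_pos two_pos]
    congr 1; rw [hLdef]; ring
  set f : ℝ → ℝ := fun x => Real.exp (x * (-t) / (x + 1)) with hfdef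
  have hmeas : Measurable f := ((measurable_id.mul_const (-t)).div (measurable_id.add_const 1)).exp
  have hf_le_one : ∀ᵐ x ∂μ, f x ≤ 1 := by
    filter_upwards [hae0] with x hx
    rw [hfdef]
    simp only
    rw [Real.exp_le_one_iff]
    have hx1 : (0:ℝ) < x + 1 := by linarith
    exact div_nonpos_of_nonpos_of_nonneg (by nlinarith) hx1.le
  have hint : Integrable f μ := by
    refine (integrable_const (1:ℝ)).mono' hmeas.aestronglyMeasurable ?_
    filter_upwards [hf_le_one] with x hx
    rw [Real.norm_eq_abs, abs_of_pos (Real.exp_pos _)]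
    exact hx
  have hmEGF : mEGF μ (-t) = ∫ x, f x ∂μ := rfl
  -- measure of Icc 0 δ
  have hIcc : μ (Set.Icc 0 δ) = ENNReal.ofReal E := by
    apply le_antisymm
    · rw [← hμIic]; exact measure_mono Set.Icc_subset_Iic_self
    · rw [← hμIic]
      calc μ (Set.Iic δ) ≤ μ (Set.Iio 0 ∪ Set.Icc 0 δ) := by
            apply measure_mono
            intro y hy
            rcases lt_or_ge y 0 with h | h
            · exact Or.inl h
            · exact Or.inr ⟨h, hy⟩
        _ ≤ μ (Set.Iio 0) + μ (Set.Icc 0 δ) := measure_union_le _ _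
        _ = μ (Set.Icc 0 δ) := by rw [hnull, zero_add]
  have htoRealIcc : (μ (Set.Icc 0 δ)).toReal = E := by
    rw [hIcc, ENNReal.toReal_ofReal hE0.le]
  constructor
  · -- lower bound
    have hlow1 : Real.exp (-(δ*t)) * (μ (Set.Icc 0 δ)).toReal ≤ ∫ x in Set.Icc 0 δ, f x ∂μ := by
      refine setIntegral_ge_of_const_le_real measurableSet_Icc (measure_ne_top μ _) ?_ hint.integrableOn
      intro x hx
      obtain ⟨hx0, hxδ⟩ := hx
      show Real.exp (-(δ*t)) ≤ Real.exp (x * (-t) / (x + 1))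
      apply Real.exp_le_exp.mpr
      have hx1 : (0:ℝ) < x + 1 := by linarith
      have heq : x * (-t) / (x+1) = -(x*t/(x+1)) := by ring
      rw [heq, neg_le_neg_iff]
      rw [div_le_iff₀ hx1]
      nlinarith [mul_le_mul_of_nonneg_right hxδ ht0.le,
        mul_nonneg (mul_nonneg hδ0.le ht0.le) hx0]
    have hlow2 : ∫ x in Set.Icc 0 δ, f x ∂μ ≤ mEGF μ (-t) := by
      rw [hmEGF]
      exact setIntegral_le_integral hint (ae_of_all _ fun x => (Real.exp_pos _).le)
    have hexp : Real.exp (-Real.sqrt L) ^ (2 * Real.sqrt t) = Real.exp (-(2*S)) := by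
      rw [← Real.exp_mul]
      congr 1
      rw [hS]; ring
    have hδt : δ * t ≤ S := by
      have h2 : t ≤ S * n := by nlinarith
      have hne : (n:ℝ) ≠ 0 := ne_of_gt hnr
      have h3 : (δ*t)*n = t := by rw [hδdef]; field_simp
      nlinarith
    have hnL : (n:ℝ) * L ≤ S + L := by nlinarith
    calc Real.exp (-L) * Real.exp (-Real.sqrt L) ^ (2 * Real.sqrt t)
        = Real.exp (-L + -(2*S)) := by rw [hexp, ← Real.exp_add]
      _ ≤ Real.exp (-(δ*t) + -((n:ℝ)*L)) := by
          apply Real.exp_le_exp.mpr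
          linarith
      _ = Real.exp (-(δ*t)) * E := by rw [Real.exp_add, hE]
      _ = Real.exp (-(δ*t)) * (μ (Set.Icc 0 δ)).toReal := by rw [htoRealIcc]
      _ ≤ mEGF μ (-t) := hlow1.trans hlow2
  · -- upper bound
    have hsplit : mEGF μ (-t) = (∫ x in Set.Iic δ, f x ∂μ) + ∫ x in (Set.Iic δ)ᶜ, f x ∂μ := by
      rw [hmEGF, integral_add_compl measurableSet_Iic hint]
    have hup1 : ∫ x in Set.Iic δ, f x ∂μ ≤ E := by
      calc ∫ x in Set.Iic δ, f x ∂μ ≤ ∫ _x in Set.Iic δ, (1:ℝ) ∂μ :=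
            setIntegral_mono_ae hint.integrableOn (integrable_const 1) hf_le_one
        _ = (μ (Set.Iic δ)).toReal := by rw [setIntegral_const]; simp [Measure.real]
        _ = E := by rw [hμIic, ENNReal.toReal_ofReal hE0.le]
    have hup2 : ∫ x in (Set.Iic δ)ᶜ, f x ∂μ ≤ Real.exp (2*L - S) := by
      rw [Set.compl_Iic]
      have hptwise : ∀ x ∈ Set.Ioi δ, f x ≤ Real.exp (-(t/((n:ℝ)+1))) := by
        intro x hx
        have hx0 : 0 < x := hδ0.trans hx
        have hx1 : (0:ℝ) < x + 1 := by linarith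
        have hxn : 1 ≤ x * n := by
          have h' := mul_lt_mul_of_pos_right (Set.mem_Ioi.mp hx) hnr
          have hne : (n:ℝ) ≠ 0 := ne_of_gt hnr
          have : δ * n = 1 := by rw [hδdef]; field_simp
          nlinarith
        show Real.exp (x * (-t) / (x + 1)) ≤ Real.exp (-(t/((n:ℝ)+1)))
        apply Real.exp_le_exp.mpr
        have heq : x * (-t) / (x+1) = -(x*t/(x+1)) := by ring
        rw [heq, neg_le_neg_iff, div_le_div_iff₀ (by positivity) hx1]
        nlinarith
      calc ∫ x in Set.Ioi δ, f x ∂μ ≤ ∫ _x in Set.Ioi δ, Real.exp (-(t/((n:ℝ)+1))) ∂μ :=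
            setIntegral_mono_on hint.integrableOn
              (integrableOn_const) measurableSet_Ioi hptwise
        _ = (μ (Set.Ioi δ)).toReal • Real.exp (-(t/((n:ℝ)+1))) := setIntegral_const _
        _ ≤ 1 * Real.exp (-(t/((n:ℝ)+1))) := by
            rw [smul_eq_mul]
            apply mul_le_mul_of_nonneg_right _ (Real.exp_pos _).le
            refine ENNReal.toReal_le_of_le_ofReal zero_le_one ?_
            rw [ENNReal.ofReal_one]
            exact le_trans (measure_mono (Set.subset_univ _)) hfin
        _ ≤ Real.exp (2*L - S) := by
            rw [one_mul]
            apply Real.exp_le_exp.mpr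
            have hstep : (S - 2*L) * ((n:ℝ)+1) ≤ t := by
              nlinarith [mul_le_mul_of_nonneg_left hn1'.le hS0.le,
                mul_le_mul_of_nonneg_left hrn hL.le]
            have h4 : S - 2*L ≤ t/((n:ℝ)+1) := (le_div_iff₀ (by positivity)).mpr hstep
            linarith
    have hexpS : Real.exp (-Real.sqrt L) ^ (Real.sqrt t) = Real.exp (-S) := by
      rw [← Real.exp_mul]
      congr 1
      rw [hS]; ring
    have hES : E ≤ Real.exp (-S) := by
      rw [hE]
      apply Real.exp_le_exp.mpr
      nlinarith [mul_le_mul_of_nonneg_left hrn hL.le]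
    calc mEGF μ (-t) = (∫ x in Set.Iic δ, f x ∂μ) + ∫ x in (Set.Iic δ)ᶜ, f x ∂μ := hsplit
      _ ≤ E + Real.exp (2*L - S) := add_le_add hup1 hup2
      _ ≤ Real.exp (-S) + Real.exp (2*L) * Real.exp (-S) := by
          rw [show (2*L - S) = 2*L + (-S) by ring, Real.exp_add]
          exact add_le_add hES le_rfl
      _ = (1 + Real.exp (2*L)) * Real.exp (-S) := by ring
      _ = (1 + Real.exp (2*L)) * Real.exp (-Real.sqrt L) ^ (Real.sqrt t) := by rw [hexpS]
end

section
/- The dyadic period function G satisfies the symmetry property G(z+1) = −(1/z^2)·G(1/z + 1) − 1/z for every z ∈ ℂ ∖ (0,∞), z ≠ 0; moreover G(z) → 0 as |z| → ∞ in such a way that the distance from z to the positive real axis ℝ_+ tends to infinity. -/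
open scoped Classical
open MeasureTheory

/-- The cut plane `ℂ ∖ (0, ∞)`. -/
def cutPlaneZero : Set ℂ := {z : ℂ | z.im ≠ 0 ∨ z.re ≤ 0}

/-- The dyadic period function
`G(z) = ∫₀^∞ (x/(x+1))/(1 − z·x/(x+1)) dF(x)`, holomorphic on `ℂ ∖ (1,∞)`,
with `G(z) = Σ_{L≥1} m_L z^{L−1}` for `|z| < 1`. -/
noncomputable def dyadicG (μ : Measure ℝ) (z : ℂ) : ℂ :=
  ∫ x, ((x : ℂ) / ((x : ℂ) + 1)) * (1 - z * ((x : ℂ) / ((x : ℂ) + 1)))⁻¹ ∂μ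

namespace MinkAux

noncomputable def T (x : ℝ) (k : ℕ) : ℝ :=
  (cfSum x k).elim 0 fun s => (-1 : ℝ) ^ (k + 1) * (2 : ℝ) ^ (-s)

lemma minkQ_eq (x : ℝ) : minkQ x = 1 + ∑' k, T x k := rfl

lemma cfSum_zero (x : ℝ) : cfSum x 0 = some (⌊x⌋ : ℝ) := rfl

lemma cfSum_succ (x : ℝ) (k : ℕ) :
    cfSum x (k + 1) = (cfSum x k).bind fun s =>
      ((GenContFract.of x).partDens.get? k).map fun b => s + b := rfl

lemma cfSum_none_succ {x : ℝ} {k : ℕ} (h : cfSum x k = none) : cfSum x (k + 1) = none := by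
  rw [cfSum_succ, h]; rfl

lemma cfSum_succ_elim {x : ℝ} {k : ℕ} {t : ℝ} (h : cfSum x (k + 1) = some t) :
    ∃ s b, cfSum x k = some s ∧ (GenContFract.of x).partDens.get? k = some b ∧ t = s + b := by
  rw [cfSum_succ] at h
  rcases hk : cfSum x k with _ | s
  · simp [hk] at h
  · rw [hk] at h
    rcases hb : (GenContFract.of x).partDens.get? k with _ | b
    · simp [hb] at h
    · rw [hb] at h
      simp only [Option.bind_some, Option.map_some, Option.some.injEq] at h
      exact ⟨s, b, rfl, rfl, h.symm⟩

lemma cfSum_succ_lt {x : ℝ} {k : ℕ} {s t : ℝ} (hs : cfSum x k = some s)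
    (ht : cfSum x (k + 1) = some t) : s + 1 ≤ t := by
  obtain ⟨s', b, hs', hb, rfl⟩ := cfSum_succ_elim ht
  rw [hs] at hs'
  obtain rfl : s' = s := by injection hs'.symm
  have := GenContFract.of_one_le_get?_partDen hb
  linarith

lemma cfSum_ge {x : ℝ} : ∀ k (s : ℝ), cfSum x k = some s → (⌊x⌋ : ℝ) + k ≤ s := by
  intro k
  induction k with
  | zero => intro s hs; rw [cfSum_zero] at hs; injection hs with h; simp [← h]
  | succ k ih =>
    intro t ht
    obtain ⟨s, b, hs, hb, rfl⟩ := cfSum_succ_elim ht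
    have h1 := ih s hs
    have h2 := GenContFract.of_one_le_get?_partDen hb
    push_cast
    linarith

lemma abs_T_le (x : ℝ) (k : ℕ) :
    |T x k| ≤ (2 : ℝ) ^ (-(⌊x⌋ : ℝ)) * (1 / 2 : ℝ) ^ k := by
  have hpos : (0 : ℝ) < (2 : ℝ) ^ (-(⌊x⌋ : ℝ)) * (1 / 2 : ℝ) ^ k := by positivity
  rcases hk : cfSum x k with _ | s
  · simp [T, hk]; positivity
  · have hs := cfSum_ge k s hk
    have : |T x k| = (2 : ℝ) ^ (-s) := by
      simp [T, hk, abs_mul, abs_pow, abs_of_pos (Real.rpow_pos_of_pos two_pos (-s))]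
    rw [this]
    have h1 : (2 : ℝ) ^ (-s) ≤ (2 : ℝ) ^ (-((⌊x⌋ : ℝ) + k)) :=
      Real.rpow_le_rpow_of_exponent_le one_le_two (by linarith)
    calc (2 : ℝ) ^ (-s) ≤ (2 : ℝ) ^ (-((⌊x⌋ : ℝ) + k)) := h1
      _ = (2 : ℝ) ^ (-(⌊x⌋ : ℝ)) * (1 / 2 : ℝ) ^ k := by
          rw [neg_add, Real.rpow_add two_pos]
          congr 1
          rw [Real.rpow_neg (by norm_num), Real.rpow_natCast]
          simp [one_div, inv_pow]

lemma summable_T (x : ℝ) : Summable (T x) := by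
  have hg : Summable (fun k : ℕ => (2 : ℝ) ^ (-(⌊x⌋ : ℝ)) * (1 / 2 : ℝ) ^ k) :=
    (summable_geometric_of_lt_one (by norm_num) (by norm_num)).mul_left _
  exact Summable.of_norm_bounded hg
    (fun k => by simpa [Real.norm_eq_abs] using abs_T_le x k)

lemma T_even (x : ℝ) (j : ℕ) :
    T x (2 * j) = (cfSum x (2 * j)).elim 0 fun s => -(2 : ℝ) ^ (-s) := by
  rcases h : cfSum x (2 * j) with _ | s
  · simp [T, h]
  · simp only [T, h, Option.elim]
    rw [(by ring : 2 * j + 1 = 2 * j + 1), Odd.neg_one_pow ⟨j, by ring⟩]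
    ring

lemma T_odd (x : ℝ) (j : ℕ) :
    T x (2 * j + 1) = (cfSum x (2 * j + 1)).elim 0 fun s => (2 : ℝ) ^ (-s) := by
  rcases h : cfSum x (2 * j + 1) with _ | s
  · simp [T, h]
  · simp only [T, h, Option.elim]
    rw [Even.neg_one_pow ⟨j + 1, by ring⟩]
    ring

lemma T_even' (x : ℝ) (j : ℕ) :
    T x (2 * j + 2) = (cfSum x (2 * j + 2)).elim 0 fun s => -(2 : ℝ) ^ (-s) := by
  have := T_even x (j + 1)
  rwa [(by ring : 2 * (j + 1) = 2 * j + 2)] at this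

lemma pair_le (x : ℝ) (j : ℕ) : T x (2 * j) + T x (2 * j + 1) ≤ 0 := by
  rcases h0 : cfSum x (2 * j) with _ | s
  · rw [T_even, T_odd, h0, cfSum_none_succ h0]; simp
  · rcases h1 : cfSum x (2 * j + 1) with _ | s'
    · rw [T_even, T_odd, h0, h1]
      simp only [Option.elim]
      have := Real.rpow_pos_of_pos two_pos (-s)
      linarith
    · rw [T_even, T_odd, h0, h1]
      simp only [Option.elim]
      have hss := cfSum_succ_lt h0 h1
      have : (2 : ℝ) ^ (-s') ≤ (2 : ℝ) ^ (-s) :=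
        Real.rpow_le_rpow_of_exponent_le one_le_two (by linarith)
      linarith

lemma pair_ge (x : ℝ) (j : ℕ) : 0 ≤ T x (2 * j + 1) + T x (2 * j + 2) := by
  rcases h0 : cfSum x (2 * j + 1) with _ | s
  · rw [T_odd, T_even', h0, cfSum_none_succ h0]; simp
  · rcases h1 : cfSum x (2 * j + 2) with _ | s'
    · rw [T_odd, T_even', h0, h1]
      simp only [Option.elim]
      have := Real.rpow_pos_of_pos two_pos (-s)
      linarith
    · rw [T_odd, T_even', h0, h1]
      simp only [Option.elim]
      have hss := cfSum_succ_lt h0 h1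
      have : (2 : ℝ) ^ (-s') ≤ (2 : ℝ) ^ (-s) :=
        Real.rpow_le_rpow_of_exponent_le one_le_two (by linarith)
      linarith

lemma tsum_T_nonpos (x : ℝ) : ∑' k, T x k ≤ 0 := by
  have hs := summable_T x
  have he : Summable fun j => T x (2 * j) :=
    hs.comp_injective (fun a b h => by omega)
  have ho : Summable fun j => T x (2 * j + 1) :=
    hs.comp_injective (fun a b h => by omega)
  rw [← tsum_even_add_odd he ho, ← Summable.tsum_add he ho]
  exact tsum_nonpos (pair_le x)

lemma T_zero (x : ℝ) : T x 0 = -(2 : ℝ) ^ (-(⌊x⌋ : ℝ)) := by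
  simp [T, cfSum_zero]

lemma tsum_T_ge (x : ℝ) : -(2 : ℝ) ^ (-(⌊x⌋ : ℝ)) ≤ ∑' k, T x k := by
  have hs := summable_T x
  have hs1 : Summable fun k => T x (k + 1) := (summable_nat_add_iff 1).mpr hs
  rw [Summable.tsum_eq_zero_add hs, T_zero]
  have he : Summable fun j => T x (2 * j + 1) :=
    hs.comp_injective (fun a b h => by omega)
  have ho : Summable fun j => T x (2 * j + 2) :=
    hs.comp_injective (fun a b h => by omega)
  have he' : Summable fun j => T x (2 * j + 1) :=
    hs.comp_injective (fun a b h => by omega)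
  have ho' : Summable fun j => T x (2 * j + 1 + 1) :=
    hs.comp_injective (fun a b h => by omega)
  have key : 0 ≤ ∑' k, T x (k + 1) := by
    rw [← tsum_even_add_odd (f := fun k => T x (k + 1)) he' ho', ← Summable.tsum_add he' ho']
    refine tsum_nonneg fun j => ?_
    simpa using pair_ge x j
  linarith

lemma minkQ_le_one (x : ℝ) : minkQ x ≤ 1 := by
  have := tsum_T_nonpos x
  rw [minkQ_eq]; linarith

lemma one_sub_le_minkQ (x : ℝ) : 1 - (2 : ℝ) ^ (-(⌊x⌋ : ℝ)) ≤ minkQ x := by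
  have := tsum_T_ge x
  rw [minkQ_eq]; linarith

lemma minkQ_nonneg {x : ℝ} (hx : 0 ≤ x) : 0 ≤ minkQ x := by
  have h1 : (2 : ℝ) ^ (-(⌊x⌋ : ℝ)) ≤ 1 := by
    apply Real.rpow_le_one_of_one_le_of_nonpos one_le_two
    refine neg_nonpos.mpr ?_
    exact_mod_cast Int.floor_nonneg.mpr hx
  have := one_sub_le_minkQ x
  linarith

lemma cfSum_nat_succ (n : ℕ) : ∀ k, cfSum (n : ℝ) (k + 1) = none := by
  have hnil : (GenContFract.of ((n : ℤ) : ℝ)).s = Stream'.Seq.nil :=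
    GenContFract.of_s_of_int ℝ (n : ℤ)
  have hpd : ∀ k, (GenContFract.of (n : ℝ)).partDens.get? k = none := by
    intro k
    rw [GenContFract.partDen_none_iff_s_none]
    rw [show ((n : ℤ) : ℝ) = (n : ℝ) by push_cast; ring] at hnil
    rw [hnil]
    exact Stream'.Seq.get?_nil k
  intro k
  induction k with
  | zero => rw [cfSum_succ, cfSum_zero, hpd]; rfl
  | succ k ih => rw [cfSum_succ, ih]; rfl

lemma minkQ_nat (n : ℕ) : minkQ (n : ℝ) = 1 - (2 : ℝ) ^ (-(n : ℝ)) := by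
  rw [minkQ_eq]
  have : ∑' k, T (n : ℝ) k = T (n : ℝ) 0 := by
    refine tsum_eq_single 0 fun k hk => ?_
    obtain ⟨m, rfl⟩ : ∃ m, k = m + 1 := ⟨k - 1, by omega⟩
    simp [T, cfSum_nat_succ n m]
  rw [this, T_zero, Int.floor_natCast]
  push_cast
  ring

lemma minkQ_zero : minkQ 0 = 0 := by
  have := minkQ_nat 0
  simpa using this

section Inv

variable {x : ℝ} (hx : 1 < x)
include hx

lemma hy0 : 0 < x⁻¹ := inv_pos.2 (lt_trans one_pos hx)

lemma hy1 : x⁻¹ < 1 := inv_lt_one_of_one_lt₀ hx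

lemma hfr : Int.fract x⁻¹ = x⁻¹ := Int.fract_eq_self.2 ⟨(hy0 hx).le, hy1 hx⟩

lemma s_inv_succ (n : ℕ) :
    (GenContFract.of x⁻¹).s.get? (n + 1) = (GenContFract.of x).s.get? n := by
  rw [GenContFract.of_s_succ, hfr hx, inv_inv]

lemma s_inv_zero :
    (GenContFract.of x⁻¹).s.get? 0 = some ⟨1, ((⌊x⌋ : ℤ) : ℝ)⟩ := by
  have hne : Int.fract x⁻¹ ≠ 0 := by
    rw [hfr hx]; exact ne_of_gt (hy0 hx)
  have := GenContFract.of_s_head hne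
  rw [hfr hx, inv_inv] at this
  exact this

lemma partDens_inv_succ (n : ℕ) :
    (GenContFract.of x⁻¹).partDens.get? (n + 1) = (GenContFract.of x).partDens.get? n := by
  simp only [GenContFract.partDens, Stream'.Seq.map_get?, s_inv_succ hx]

lemma partDens_inv_zero :
    (GenContFract.of x⁻¹).partDens.get? 0 = some ((⌊x⌋ : ℤ) : ℝ) := by
  simp only [GenContFract.partDens, Stream'.Seq.map_get?, s_inv_zero hx]
  rfl

lemma floor_inv : ⌊x⁻¹⌋ = 0 :=
  Int.floor_eq_zero_iff.2 ⟨(hy0 hx).le, hy1 hx⟩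

lemma cfSum_inv_zero : cfSum x⁻¹ 0 = some 0 := by
  rw [cfSum_zero, floor_inv hx]; norm_num

lemma cfSum_inv_succ : ∀ k, cfSum x⁻¹ (k + 1) = cfSum x k := by
  intro k
  induction k with
  | zero =>
    rw [cfSum_succ, cfSum_inv_zero hx, partDens_inv_zero hx, cfSum_zero]
    simp
  | succ k ih =>
    rw [cfSum_succ, ih, partDens_inv_succ hx, ← cfSum_succ]

lemma T_inv_zero : T x⁻¹ 0 = -1 := by
  simp [T, cfSum_inv_zero hx]

lemma T_inv_succ (k : ℕ) : T x⁻¹ (k + 1) = -T x k := by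
  simp only [T, cfSum_inv_succ hx]
  rcases h : cfSum x k with _ | s
  · simp
  · simp only [Option.elim]
    rw [pow_succ]
    ring

lemma minkQ_inv_of_one_lt : minkQ x⁻¹ = 1 - minkQ x := by
  rw [minkQ_eq, minkQ_eq x]
  have hs := summable_T x⁻¹
  rw [Summable.tsum_eq_zero_add hs, T_inv_zero hx]
  have h2 : ∑' k, T x⁻¹ (k + 1) = ∑' k, -T x k := tsum_congr (T_inv_succ hx)
  rw [h2, tsum_neg]
  ring

end Inv

lemma minkQ_one : minkQ 1 = 1 / 2 := by
  have := minkQ_nat 1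
  rw [Nat.cast_one] at this
  rw [this]
  rw [show (-(1:ℝ)) = ((-1 : ℤ) : ℝ) by norm_num, Real.rpow_intCast]
  norm_num

lemma minkQ_inv {x : ℝ} (hx : 0 < x) : minkQ x⁻¹ = 1 - minkQ x := by
  rcases lt_trichotomy x 1 with h | h | h
  · have h' : 1 < x⁻¹ := (one_lt_inv₀ hx).2 h
    have := minkQ_inv_of_one_lt h'
    rw [inv_inv] at this
    linarith
  · subst h
    rw [inv_one, minkQ_one]
    norm_num
  · exact minkQ_inv_of_one_lt h

section Meas

open Set

variable {μ : Measure ℝ} (hμ : IsMinkowskiMeasure μ)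
include hμ

lemma meas_Iic {x : ℝ} (hx : 0 ≤ x) : μ (Iic x) = ENNReal.ofReal (minkQ x) := hμ.2 x hx

lemma meas_Iic_zero : μ (Iic 0) = 0 := by
  rw [hμ.2 0 le_rfl, minkQ_zero]; simp

lemma meas_univ : μ univ = 1 := by
  have hU : (⋃ n : ℕ, Iic (n : ℝ)) = univ := by
    ext u; simp only [mem_iUnion, mem_Iic, mem_univ, iff_true]
    exact ⟨⌈u⌉₊, Nat.le_ceil u⟩
  have hmono : Monotone fun n : ℕ => Iic (n : ℝ) := fun m n h => Iic_subset_Iic.2 (by exact_mod_cast h)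
  have t1 := tendsto_measure_iUnion_atTop (μ := μ) hmono
  rw [hU] at t1
  have t2 : Filter.Tendsto (fun n : ℕ => μ (Iic (n : ℝ))) Filter.atTop (nhds 1) := by
    have heq : ∀ n : ℕ, μ (Iic (n : ℝ)) = ENNReal.ofReal (1 - (1 / 2 : ℝ) ^ n) := by
      intro n
      rw [hμ.2 n (by positivity), minkQ_nat]
      congr 1
      rw [Real.rpow_neg (by norm_num), Real.rpow_natCast]
      simp [one_div, inv_pow]
    simp only [heq]
    have hr : Filter.Tendsto (fun n : ℕ => 1 - (1 / 2 : ℝ) ^ n) Filter.atTop (nhds 1) := by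
      have := tendsto_pow_atTop_nhds_zero_of_lt_one (by norm_num : (0:ℝ) ≤ 1/2) (by norm_num)
      simpa using tendsto_const_nhds.sub this
    have := ENNReal.tendsto_ofReal hr
    simpa using this
  exact tendsto_nhds_unique t1 t2

lemma meas_ne_top (s : Set ℝ) : μ s ≠ ⊤ :=
  ne_top_of_le_ne_top (by rw [meas_univ hμ]; exact ENNReal.one_ne_top)
    (measure_mono (subset_univ _))

lemma tendsto_meas_Iic_anti {t : ℝ} {a : ℕ → ℝ} (hmono : Antitone a)
    (hge : ∀ n, t ≤ a n) (hlim : Filter.Tendsto a Filter.atTop (nhds t)) :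
    Filter.Tendsto (fun n => μ (Iic (a n))) Filter.atTop (nhds (μ (Iic t))) := by
  have h1 : ⋂ n, Iic (a n) = Iic t := by
    ext u; simp only [mem_iInter, mem_Iic]
    constructor
    · intro h
      exact ge_of_tendsto hlim (Filter.Eventually.of_forall h)
    · intro h n; exact h.trans (hge n)
  have := tendsto_measure_iInter_atTop (μ := μ) (s := fun n => Iic (a n))
    (fun n => measurableSet_Iic.nullMeasurableSet)
    (fun m n h => Iic_subset_Iic.2 (hmono h)) ⟨0, meas_ne_top hμ _⟩
  rwa [h1] at this

lemma meas_Iio {c : ℝ} (hc : 0 < c) : μ (Iio c) = ENNReal.ofReal (minkQ c) := by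
  set a : ℕ → ℝ := fun n => c - c / (n + 2) with ha
  have hapos : ∀ n, 0 < a n := by
    intro n
    have h1 : c / (n + 2 : ℝ) < c := by
      rw [div_lt_iff₀ (by positivity)]
      nlinarith [Nat.cast_nonneg (α := ℝ) n]
    simpa [ha] using sub_pos.2 h1
  have haltc : ∀ n, a n < c := by
    intro n
    have : 0 < c / (n + 2 : ℝ) := by positivity
    simp only [ha]; linarith
  have hamono : Monotone a := by
    intro m n h
    have : c / (n + 2 : ℝ) ≤ c / (m + 2 : ℝ) := by
      apply div_le_div_of_nonneg_left hc.le (by positivity)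
      push_cast; exact_mod_cast by exact_mod_cast add_le_add_left (by exact_mod_cast h : (m:ℝ) ≤ n) 2
    simp only [ha]; linarith
  have halim : Filter.Tendsto a Filter.atTop (nhds c) := by
    have h0 : Filter.Tendsto (fun n : ℕ => c / (n + 2 : ℝ)) Filter.atTop (nhds 0) := by
      apply Filter.Tendsto.div_atTop tendsto_const_nhds
      exact Filter.tendsto_atTop_add_const_right _ 2 (tendsto_natCast_atTop_atTop)
    simpa [ha] using tendsto_const_nhds.sub h0
  have hUnion : (⋃ n, Iic (a n)) = Iio c := by
    ext u
    simp only [mem_iUnion, mem_Iic, mem_Iio]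
    constructor
    · rintro ⟨n, hn⟩; exact lt_of_le_of_lt hn (haltc n)
    · intro hu
      have := (halim.eventually (eventually_gt_nhds hu)).exists
      obtain ⟨n, hn⟩ := this
      exact ⟨n, hn.le⟩
  have t1 : Filter.Tendsto (fun n => μ (Iic (a n))) Filter.atTop (nhds (μ (Iio c))) := by
    have := tendsto_measure_iUnion_atTop (μ := μ)
      (fun m n h => Iic_subset_Iic.2 (hamono h))
    rwa [hUnion] at this
  set b : ℕ → ℝ := fun n => (a n)⁻¹ with hb
  have hbanti : Antitone b := fun m n h =>
    inv_anti₀ (hapos m) (hamono h)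
  have hbge : ∀ n, c⁻¹ ≤ b n := fun n => inv_anti₀ (hapos n) (haltc n).le
  have hblim : Filter.Tendsto b Filter.atTop (nhds c⁻¹) := halim.inv₀ (ne_of_gt hc)
  have t2 := tendsto_meas_Iic_anti hμ hbanti hbge hblim
  have key : ∀ n, μ (Iic (a n)) = 1 - μ (Iic (b n)) := by
    intro n
    rw [meas_Iic hμ (hapos n).le, meas_Iic hμ (le_trans (by positivity) (hbge n))]
    have h1 : minkQ (b n) = 1 - minkQ (a n) := minkQ_inv (hapos n)
    have h2 : minkQ (a n) = 1 - minkQ (b n) := by linarith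
    rw [h2, ENNReal.ofReal_sub _ (minkQ_nonneg (le_trans (by positivity) (hbge n)))]
    simp
  simp only [key] at t1
  have t3 : Filter.Tendsto (fun n => 1 - μ (Iic (b n))) Filter.atTop
      (nhds (1 - μ (Iic c⁻¹))) :=
    ENNReal.Tendsto.sub tendsto_const_nhds t2 (Or.inl ENNReal.one_ne_top)
  have h4 : μ (Iio c) = 1 - μ (Iic c⁻¹) := tendsto_nhds_unique t1 t3
  rw [h4, meas_Iic hμ (by positivity), minkQ_inv hc,
    ENNReal.ofReal_sub _ (minkQ_nonneg hc.le), ENNReal.ofReal_one,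
    ENNReal.sub_sub_cancel ENNReal.one_ne_top (ENNReal.ofReal_le_one.2 (minkQ_le_one c))]

lemma map_inv : Measure.map (fun x : ℝ => x⁻¹) μ = μ := by
  haveI : IsFiniteMeasure μ := ⟨by rw [meas_univ hμ]; exact ENNReal.one_lt_top⟩
  refine MeasureTheory.Measure.ext_of_Iic (Measure.map _ μ) μ fun c => ?_
  rw [Measure.map_apply measurable_inv measurableSet_Iic]
  rcases lt_trichotomy c 0 with hc | hc | hc
  · have h1 : (fun x : ℝ => x⁻¹) ⁻¹' Iic c ⊆ Iio 0 := by
      intro x hx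
      simp only [mem_preimage, mem_Iic] at hx
      simp only [mem_Iio]
      by_contra h
      push_neg at h
      have : (0:ℝ) ≤ x⁻¹ := inv_nonneg.2 h
      linarith
    rw [measure_mono_null h1 hμ.1, measure_mono_null (Iic_subset_Iio.2 hc) hμ.1]
  · subst hc
    have h1 : (fun x : ℝ => x⁻¹) ⁻¹' Iic 0 = Iic 0 := by
      ext x; simp [inv_nonpos]
    rw [h1]
  · have h1 : (fun x : ℝ => x⁻¹) ⁻¹' Iic c = Iic 0 ∪ Ici c⁻¹ := by
      ext x
      simp only [mem_preimage, mem_Iic, mem_union, mem_Ici]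
      constructor
      · intro h
        rcases le_or_gt x 0 with h0 | h0
        · exact Or.inl h0
        · refine Or.inr ?_
          have := inv_anti₀ (by positivity : (0:ℝ) < x⁻¹) h
          rwa [inv_inv] at this
      · rintro (h | h)
        · exact le_trans (inv_nonpos.2 h) hc.le
        · have hx : 0 < x := lt_of_lt_of_le (by positivity) h
          calc x⁻¹ ≤ (c⁻¹)⁻¹ := inv_anti₀ (by positivity) h
            _ = c := inv_inv c
    rw [h1]
    have h2 : μ (Iic 0 ∪ Ici c⁻¹) = μ (Ici c⁻¹) := by
      refine le_antisymm ?_ (measure_mono subset_union_right)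
      refine le_trans (measure_union_le _ _) ?_
      rw [meas_Iic_zero hμ, zero_add]
    rw [h2]
    have h3 : μ (Ici c⁻¹) = 1 - μ (Iio c⁻¹) := by
      rw [← compl_Iio, measure_compl measurableSet_Iio (meas_ne_top hμ _), meas_univ hμ]
    rw [h3, meas_Iio hμ (by positivity), minkQ_inv hc,
      ENNReal.ofReal_sub _ (minkQ_nonneg hc.le), ENNReal.ofReal_one,
      ENNReal.sub_sub_cancel ENNReal.one_ne_top (ENNReal.ofReal_le_one.2 (minkQ_le_one c)),
      meas_Iic hμ hc.le]

end Meas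

end MinkAux

namespace MinkAux

open Set

noncomputable def Spos : Set ℂ := {w : ℂ | w.im = 0 ∧ 0 ≤ w.re}

lemma Spos_closed : IsClosed Spos :=
  (isClosed_eq Complex.continuous_im continuous_const).inter
    (isClosed_le continuous_const Complex.continuous_re)

lemma mem_Spos {x : ℝ} (hx : 0 ≤ x) : (x : ℂ) ∈ Spos := by
  constructor <;> simp [hx]

lemma infDist_pos {z : ℂ} (hz : z ∉ Spos) : 0 < Metric.infDist z Spos :=
  (Spos_closed.notMem_iff_infDist_pos ⟨0, by constructor <;> simp⟩).1 hz

lemma infDist_le {z : ℂ} {x : ℝ} (hx : 0 ≤ x) : Metric.infDist z Spos ≤ ‖(x : ℂ) - z‖ := by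
  have := Metric.infDist_le_dist_of_mem (x := z) (mem_Spos hx)
  rwa [dist_eq_norm, norm_sub_rev] at this

lemma not_mem_Spos {z : ℂ} (hz : z.im ≠ 0 ∨ z.re ≤ 0) (h0 : z ≠ 0) : z ∉ Spos := by
  rintro ⟨him, hre⟩
  rcases hz with h | h
  · exact h him
  · apply h0
    apply Complex.ext
    · exact le_antisymm h hre
    · exact him

lemma sub_ne_zero' {z : ℂ} (hz : z ∉ Spos) {x : ℝ} (hx : 0 ≤ x) : (x : ℂ) - z ≠ 0 := by
  intro h
  rw [sub_eq_zero] at h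
  exact hz (h ▸ mem_Spos hx)

lemma one_sub_mul_ne_zero {z : ℂ} (hz : z ∉ Spos) {x : ℝ} (hx : 0 ≤ x) :
    (1 : ℂ) - z * (x : ℂ) ≠ 0 := by
  intro h
  rcases eq_or_lt_of_le hx with h0 | h0
  · rw [← h0] at h; simp at h
  · have hx0 : (x : ℂ) ≠ 0 := by exact_mod_cast ne_of_gt h0
    have hzx : z = ((x⁻¹ : ℝ) : ℂ) := by
      push_cast
      field_simp at h ⊢
      linear_combination -h
    exact hz (hzx ▸ mem_Spos (by positivity))

lemma decay_bound {z : ℂ} (hd : 0 < Metric.infDist z Spos) {x : ℝ} (hx : 0 ≤ x) :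
    ‖((x : ℂ) / ((x : ℂ) + 1)) * (1 - z * ((x : ℂ) / ((x : ℂ) + 1)))⁻¹‖ ≤
      (Metric.infDist z Spos)⁻¹ := by
  rcases eq_or_lt_of_le hx with h0 | h0
  · rw [← h0]
    simp
    positivity
  · set t : ℂ := (x : ℂ) / ((x : ℂ) + 1) with htdef
    have hx0 : (x : ℂ) ≠ 0 := by exact_mod_cast ne_of_gt h0
    have hx1 : (x : ℂ) + 1 ≠ 0 := by
      intro h
      have : (x + 1 : ℝ) = 0 := by exact_mod_cast (by push_cast at h ⊢; exact h : ((x : ℝ) : ℂ) + 1 = 0)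
      linarith
    have ht0 : t ≠ 0 := div_ne_zero hx0 hx1
    have hsplit : (1 : ℂ) - z * t = t * (t⁻¹ - z) := by
      rw [mul_sub, mul_inv_cancel₀ ht0]
      ring
    have key : t * (1 - z * t)⁻¹ = (t⁻¹ - z)⁻¹ := by
      rcases eq_or_ne (t⁻¹ - z) 0 with h | h
      · rw [hsplit, h, mul_zero, inv_zero, mul_zero]
      · calc t * (1 - z * t)⁻¹ = t * ((t⁻¹ - z)⁻¹ * t⁻¹) := by rw [hsplit, mul_inv_rev]
          _ = t * t⁻¹ * (t⁻¹ - z)⁻¹ := by ring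
          _ = (t⁻¹ - z)⁻¹ := by rw [mul_inv_cancel₀ ht0, one_mul]
    rw [key, norm_inv]
    have htinv : t⁻¹ = (((x + 1) / x : ℝ) : ℂ) := by
      rw [htdef, inv_div]
      push_cast
      ring
    have hwge : Metric.infDist z Spos ≤ ‖t⁻¹ - z‖ := by
      rw [htinv]
      exact infDist_le (by positivity)
    exact inv_anti₀ hd hwge

lemma ratio_bound {z : ℂ} (hd : 0 < Metric.infDist z Spos) :
    ∃ C : ℝ, ∀ x : ℝ, 0 ≤ x → ‖(x : ℂ) * z * (z - (x : ℂ))⁻¹‖ ≤ C := by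
  set d := Metric.infDist z Spos with hddef
  refine ⟨‖z‖ * max (2 * ‖z‖ / d) 2, fun x hx => ?_⟩
  have hxn : ‖(x : ℂ)‖ = x := by
    rw [Complex.norm_real, Real.norm_eq_abs, abs_of_nonneg hx]
  have hdx : d ≤ ‖z - (x : ℂ)‖ := by
    rw [norm_sub_rev]
    exact infDist_le hx
  have hratio : x * ‖z - (x : ℂ)‖⁻¹ ≤ max (2 * ‖z‖ / d) 2 := by
    rcases le_total x (2 * ‖z‖) with hc | hc
    · refine le_trans ?_ (le_max_left _ _)
      rw [div_eq_mul_inv]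
      exact mul_le_mul hc (inv_anti₀ hd hdx) (by positivity) (by positivity)
    · refine le_trans ?_ (le_max_right _ _)
      rcases eq_or_lt_of_le hx with h0 | h0
      · rw [← h0]; norm_num
      · have h2 : x / 2 ≤ ‖z - (x : ℂ)‖ := by
          rw [norm_sub_rev]
          calc x / 2 = x - x / 2 := by ring
            _ ≤ x - ‖z‖ := by nlinarith
            _ = ‖(x : ℂ)‖ - ‖z‖ := by rw [hxn]
            _ ≤ ‖(x : ℂ) - z‖ := norm_sub_norm_le _ _
        calc x * ‖z - (x : ℂ)‖⁻¹ ≤ x * (x / 2)⁻¹ :=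
              mul_le_mul_of_nonneg_left (inv_anti₀ (by positivity) h2) hx
          _ = 2 := by field_simp
  calc ‖(x : ℂ) * z * (z - (x : ℂ))⁻¹‖ = ‖z‖ * (x * ‖z - (x : ℂ)‖⁻¹) := by
        rw [norm_mul, norm_mul, norm_inv, hxn]; ring
    _ ≤ ‖z‖ * max (2 * ‖z‖ / d) 2 :=
        mul_le_mul_of_nonneg_left hratio (norm_nonneg z)

end MinkAux


/-- The symmetry property `G(z+1) = −(1/z²)·G(1/z + 1) − 1/z` for
`z ∈ ℂ ∖ (0,∞)`, `z ≠ 0`; moreover `G(z) = o(1)` as `z → ∞` in such a way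
that the distance from `z` to the positive real axis tends to infinity. -/
theorem dyadicG_symmetry_and_decay (μ : Measure ℝ) (hμ : IsMinkowskiMeasure μ) :
    (∀ z : ℂ, z ∈ cutPlaneZero → z ≠ 0 →
      dyadicG μ (z + 1) = -(z ^ 2)⁻¹ * dyadicG μ (z⁻¹ + 1) - z⁻¹) ∧
    ∀ ε : ℝ, 0 < ε → ∃ R : ℝ, ∀ z : ℂ,
      R ≤ Metric.infDist z {w : ℂ | w.im = 0 ∧ 0 ≤ w.re} → ‖dyadicG μ z‖ ≤ ε := by
  haveI hfin : IsFiniteMeasure μ := ⟨by rw [MinkAux.meas_univ hμ]; exact ENNReal.one_lt_top⟩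
  haveI hprob : IsProbabilityMeasure μ := ⟨MinkAux.meas_univ hμ⟩
  have hSpos : MinkAux.Spos = {w : ℂ | w.im = 0 ∧ 0 ≤ w.re} := rfl
  have hae : ∀ᵐ x ∂μ, 0 < x := by
    rw [MeasureTheory.ae_iff]
    have hset : {x : ℝ | ¬ (0:ℝ) < x} = Set.Iic 0 := by ext u; simp
    rw [hset]
    exact MinkAux.meas_Iic_zero hμ
  constructor
  · intro z hzc hz0
    have hzS : z ∉ MinkAux.Spos := MinkAux.not_mem_Spos hzc hz0
    have hx1 : ∀ x : ℝ, 0 ≤ x → ((x:ℂ) + 1) ≠ 0 := by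
      intro x hx h
      have h2 : ((x + 1 : ℝ) : ℂ) = 0 := by push_cast; linear_combination h
      have := Complex.ofReal_eq_zero.1 h2
      linarith
    have hL1 : dyadicG μ (z + 1) = ∫ x, (x:ℂ) * (1 - z * (x:ℂ))⁻¹ ∂μ := by
      unfold dyadicG
      refine integral_congr_ae (hae.mono fun x hx => ?_)
      dsimp only
      have h1 := hx1 x hx.le
      have h2 : (1:ℂ) - z * x ≠ 0 := MinkAux.one_sub_mul_ne_zero hzS hx.le
      have key : 1 - (z + 1) * ((x:ℂ) / ((x:ℂ) + 1)) = (1 - z * x) / ((x:ℂ) + 1) := by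
        field_simp
        ring
      rw [key]
      field_simp
    have hmeas : Measurable fun y : ℝ => (y:ℂ) * (1 - z * (y:ℂ))⁻¹ :=
      Complex.measurable_ofReal.mul
        ((measurable_const.sub (measurable_const.mul Complex.measurable_ofReal)).inv)
    have hL2 : (∫ x, (x:ℂ) * (1 - z * (x:ℂ))⁻¹ ∂μ)
        = ∫ x, ((x⁻¹ : ℝ) : ℂ) * (1 - z * ((x⁻¹ : ℝ) : ℂ))⁻¹ ∂μ := by
      conv_lhs => rw [← MinkAux.map_inv hμ]
      rw [integral_map measurable_inv.aemeasurable hmeas.aestronglyMeasurable]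
    have hL3 : (∫ x, ((x⁻¹ : ℝ):ℂ) * (1 - z * ((x⁻¹:ℝ):ℂ))⁻¹ ∂μ)
        = ∫ x, ((x:ℂ) - z)⁻¹ ∂μ := by
      refine integral_congr_ae (hae.mono fun x hx => ?_)
      dsimp only
      have hx0 : (x:ℂ) ≠ 0 := by exact_mod_cast ne_of_gt hx
      have hxz : (x:ℂ) - z ≠ 0 := MinkAux.sub_ne_zero' hzS hx.le
      push_cast
      have key : 1 - z * (x:ℂ)⁻¹ = ((x:ℂ) - z) / x := by field_simp
      rw [key]
      field_simp
    have hR1 : dyadicG μ (z⁻¹ + 1) = ∫ x, (x:ℂ) * z * (z - (x:ℂ))⁻¹ ∂μ := by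
      unfold dyadicG
      refine integral_congr_ae (hae.mono fun x hx => ?_)
      dsimp only
      have h1 := hx1 x hx.le
      have hne : (x:ℂ) ≠ z := sub_ne_zero.1 (MinkAux.sub_ne_zero' hzS hx.le)
      have hzx : z - (x:ℂ) ≠ 0 := sub_ne_zero.2 hne.symm
      have key : 1 - (z⁻¹ + 1) * ((x:ℂ) / ((x:ℂ) + 1)) = (z - x) / (z * ((x:ℂ) + 1)) := by
        field_simp
        ring
      rw [key]
      field_simp
    obtain ⟨C, hC⟩ := MinkAux.ratio_bound (MinkAux.infDist_pos hzS)
    have hint : Integrable (fun x : ℝ => (x:ℂ) * z * (z - (x:ℂ))⁻¹) μ := by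
      refine ⟨Measurable.aestronglyMeasurable ((Complex.measurable_ofReal.mul
        measurable_const).mul ((measurable_const.sub Complex.measurable_ofReal).inv)), ?_⟩
      exact MeasureTheory.HasFiniteIntegral.of_bounded (C := C)
        (hae.mono fun x hx => hC x hx.le)
    have hconst : (∫ (_ : ℝ), z⁻¹ ∂μ) = z⁻¹ := by simp
    rw [hL1, hL2, hL3, hR1, ← integral_const_mul, ← hconst,
      ← integral_sub (hint.const_mul _) (integrable_const _)]
    refine integral_congr_ae (hae.mono fun x hx => ?_)
    dsimp only
    have hne : (x:ℂ) ≠ z := sub_ne_zero.1 (MinkAux.sub_ne_zero' hzS hx.le)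
    have hzx : z - (x:ℂ) ≠ 0 := sub_ne_zero.2 hne.symm
    have hxz : (x:ℂ) - z ≠ 0 := sub_ne_zero.2 hne
    field_simp
    ring
  · intro ε hε
    refine ⟨ε⁻¹ + 1, fun z hz => ?_⟩
    rw [← hSpos] at hz
    have hd : 0 < Metric.infDist z MinkAux.Spos := lt_of_lt_of_le (by positivity) hz
    have hb : ∀ᵐ x : ℝ ∂μ, ‖((x:ℂ) / ((x:ℂ) + 1)) * (1 - z * ((x:ℂ) / ((x:ℂ) + 1)))⁻¹‖
        ≤ (Metric.infDist z MinkAux.Spos)⁻¹ :=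
      hae.mono fun x hx => MinkAux.decay_bound hd hx.le
    have hnorm := MeasureTheory.norm_integral_le_of_norm_le_const hb
    rw [measureReal_def, MinkAux.meas_univ hμ, ENNReal.toReal_one, mul_one] at hnorm
    unfold dyadicG
    refine le_trans hnorm ?_
    have h1 : ε⁻¹ ≤ Metric.infDist z MinkAux.Spos := le_trans (by linarith) hz
    calc (Metric.infDist z MinkAux.Spos)⁻¹ ≤ (ε⁻¹)⁻¹ :=
          inv_anti₀ (by positivity) h1
      _ = ε := inv_inv ε
end
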